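/- Let (M, Σ_M, μ_M) be a measure space, (N, d_N) a complete metric space, h : M → N strongly measurable, and p ∈ [1,∞). Let L^p([a,b],N) be the metric space of Lebesgue-a.e.-equality classes of strongly measurable curves γ : [a,b] → N with ∫_a^b d_N(γ(t), y₀)^p dt < ∞ (for some, equivalently any, y₀ ∈ N), with metric d_p(γ,γ') := (∫_a^b d_N(γ(t), γ'(t))^p dt)^{1/p}, and let \underline{h} : M → L^p([a,b],N) send x to the class of the constant curve t ↦ h(x). Suppose f : M → L^p([a,b],N) is Borel measurable with separable range and ∫_M d_p(f(x), \underline{h}(x))^p dμ_M < ∞. Then there exists a Borel measurable ĉ : [a,b]×M → N with separable range such that ∫ d_N(ĉ(t,x), h(x))^p d(λ⊗μ_M) < ∞ and, for μ_M-a.e. x ∈ M, the curve t ↦ ĉ(t,x) is a representative of the class f(x). -/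

import Mathlib

set_option linter.unusedSectionVars false

open MeasureTheory ENNReal Set Filter Topology TopologicalSpace

noncomputable section

namespace NLS

variable {α : Type*} [MeasurableSpace α] {N : Type*} [MetricSpace N]
  [MeasurableSpace N] [BorelSpace N]

/-- "Strongly measurable": Borel measurable with separable range. -/
def SM (f : α → N) : Prop :=
  Measurable f ∧ TopologicalSpace.IsSeparable (Set.range f)

theorem SM.aesm {f : α → N} (hf : SM f) (μ : Measure α) :
    AEStronglyMeasurable f μ :=
  (stronglyMeasurable_iff_measurable_separable.2 ⟨hf.1, hf.2⟩).aestronglyMeasurable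

/-- The `L^p` (extended) distance between two maps with values in a metric space;
for `p < ∞` it is `(∫ d(f x, g x)^p dμ)^{1/p}` and for `p = ∞` the essential supremum
of `x ↦ d(f x, g x)`. -/
def Dp (μ : Measure α) (p : ℝ≥0∞) (f g : α → N) : ℝ≥0∞ :=
  eLpNorm (fun x => dist (f x) (g x)) p μ

theorem Dp_self (μ : Measure α) (p : ℝ≥0∞) (f : α → N) : Dp μ p f f = 0 := by
  unfold Dp
  simp only [dist_self]
  exact eLpNorm_zero'

theorem Dp_comm (μ : Measure α) (p : ℝ≥0∞) (f g : α → N) : Dp μ p f g = Dp μ p g f := by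
  unfold Dp
  simp only [dist_comm]

theorem Dp_triangle {μ : Measure α} {p : ℝ≥0∞} (hp : 1 ≤ p) {f g k : α → N}
    (hf : AEStronglyMeasurable f μ) (hg : AEStronglyMeasurable g μ)
    (hk : AEStronglyMeasurable k μ) :
    Dp μ p f k ≤ Dp μ p f g + Dp μ p g k := by
  have h1 : Dp μ p f k ≤
      eLpNorm ((fun x => dist (f x) (g x)) + fun x => dist (g x) (k x)) p μ := by
    refine eLpNorm_mono fun x => ?_
    simp only [Pi.add_apply, Real.norm_eq_abs]
    rw [abs_of_nonneg dist_nonneg]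
    exact (dist_triangle (f x) (g x) (k x)).trans (le_abs_self _)
  exact h1.trans (eLpNorm_add_le (hf.dist hg) (hg.dist hk) hp)

/-- The nonlinear Lebesgue space `L^p_h(α, N)` with base map `h`, presented by
representatives: Borel measurable, separably valued maps at finite `D_p`-distance
from `h`.  Two representatives at `D_p`-distance `0` (equivalently, `μ`-a.e. equal)
represent the same element of the quotient nonlinear Lebesgue space; accordingly the
canonical structure below is a pseudometric space whose metric (separation) quotient is
the actual nonlinear Lebesgue space.  All topological and Borel-measurability notions for
the quotient correspond exactly to those of this pseudometric space. -/
def NLp (μ : Measure α) (h : α → N) (_hh : SM h) (p : ℝ≥0∞) : Type _ :=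
  {f : α → N // SM f ∧ Dp μ p f h ≠ ∞}

namespace NLp

variable {μ : Measure α} {h : α → N} {hh : SM h} {p : ℝ≥0∞}

def pem (μ : Measure α) (h : α → N) (hh : SM h) (p : ℝ≥0∞) (hp : 1 ≤ p) :
    PseudoEMetricSpace (NLp μ h hh p) where
  edist f g := Dp μ p f.1 g.1
  edist_self f := Dp_self μ p f.1
  edist_comm f g := Dp_comm μ p f.1 g.1
  edist_triangle f g k := Dp_triangle hp (f.2.1.aesm μ) (g.2.1.aesm μ) (k.2.1.aesm μ)

theorem dp_ne_top (hp : 1 ≤ p) (f g : NLp μ h hh p) : Dp μ p f.1 g.1 ≠ ∞ := by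
  have htri := Dp_triangle hp (f.2.1.aesm μ) (hh.aesm μ) (g.2.1.aesm μ)
  have h2 : Dp μ p h g.1 ≠ ∞ := by rw [Dp_comm]; exact g.2.2
  exact ne_top_of_le_ne_top (ENNReal.add_ne_top.2 ⟨f.2.2, h2⟩) htri

/-- The `D_p` pseudometric on the nonlinear Lebesgue space. -/
instance [hp : Fact (1 ≤ p)] : PseudoMetricSpace (NLp μ h hh p) :=
  @PseudoEMetricSpace.toPseudoMetricSpace _ (pem μ h hh p hp.out)
    (fun f g => dp_ne_top hp.out f g)

instance [Fact (1 ≤ p)] : MeasurableSpace (NLp μ h hh p) := borel _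
instance [Fact (1 ≤ p)] : BorelSpace (NLp μ h hh p) := ⟨rfl⟩

theorem edist_def [Fact (1 ≤ p)] (f g : NLp μ h hh p) :
    edist f g = Dp μ p f.1 g.1 := rfl

theorem dist_def [Fact (1 ≤ p)] (f g : NLp μ h hh p) :
    dist f g = (Dp μ p f.1 g.1).toReal := rfl

end NLp

/-- Absolutely continuous curves: `c ∈ AC^p([a,b], X)`. -/
def MemACp {X : Type*} [PseudoMetricSpace X] (p : ℝ≥0∞) (a b : ℝ) (c : ℝ → X) : Prop :=
  ∃ m : ℝ → ℝ, MemLp m p (volume.restrict (Set.Icc a b)) ∧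
    ∀ s t : ℝ, a ≤ s → s ≤ t → t ≤ b → dist (c s) (c t) ≤ ∫ r in s..t, m r

/-- The metric derivative of a curve at `t` (limit of difference quotients within `[a,b]`). -/
def mder {X : Type*} [PseudoMetricSpace X] (a b : ℝ) (c : ℝ → X) (t : ℝ) : ℝ :=
  limUnder (𝓝[Set.Icc a b \ {t}] t) fun s => dist (c s) (c t) / |s - t|

/-- The space `L^p(ν, N)` of `p`-integrable maps into a metric space, presented by
representatives (Borel measurable, separably valued, at finite `D_p`-distance from some,
equivalently — for finite `ν` — any, constant map); as for `NLp`, the canonical structure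
is a pseudometric space whose metric quotient is the actual space of classes. -/
def LpB {β : Type*} [MeasurableSpace β] (ν : Measure β) (N : Type*) [MetricSpace N]
    [MeasurableSpace N] [BorelSpace N] (p : ℝ≥0∞) : Type _ :=
  {γ : β → N // SM γ ∧ ∃ y₀ : N, Dp ν p γ (fun _ => y₀) ≠ ∞}

namespace LpB

variable {β : Type*} [MeasurableSpace β] {ν : Measure β} {p : ℝ≥0∞}

def pem (ν : Measure β) (N : Type*) [MetricSpace N] [MeasurableSpace N] [BorelSpace N]
    (p : ℝ≥0∞) (hp : 1 ≤ p) : PseudoEMetricSpace (LpB ν N p) where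
  edist f g := Dp ν p f.1 g.1
  edist_self f := Dp_self ν p f.1
  edist_comm f g := Dp_comm ν p f.1 g.1
  edist_triangle f g k := Dp_triangle hp (f.2.1.aesm ν) (g.2.1.aesm ν) (k.2.1.aesm ν)

instance [hp : Fact (1 ≤ p)] : PseudoEMetricSpace (LpB ν N p) := pem ν N p hp.out
instance [Fact (1 ≤ p)] : MeasurableSpace (LpB ν N p) := borel _
instance [Fact (1 ≤ p)] : BorelSpace (LpB ν N p) := ⟨rfl⟩

theorem edist_def [Fact (1 ≤ p)] (f g : LpB ν N p) :
    edist f g = Dp ν p f.1 g.1 := rfl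

end LpB


/-- Auxiliary: `edist` of two strongly measurable maps is measurable. -/
private theorem sm_edist_measurable {β : Type*} [MeasurableSpace β] {N : Type*} [MetricSpace N]
    [MeasurableSpace N] [BorelSpace N] {u v : β → N} (hu : SM u) (hv : SM v) :
    Measurable fun t => edist (u t) (v t) := by
  have h1 : StronglyMeasurable u := stronglyMeasurable_iff_measurable_separable.2 ⟨hu.1, hu.2⟩
  have h2 : StronglyMeasurable v := stronglyMeasurable_iff_measurable_separable.2 ⟨hv.1, hv.2⟩
  simp_rw [edist_dist]
  exact (h1.dist h2).measurable.ennreal_ofReal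

/-- Auxiliary: the `p`-th power of the `D_p` distance is the `p`-integral of `edist^p`. -/
private theorem lintegral_edist_rpow {β : Type*} [MeasurableSpace β] {N : Type*} [MetricSpace N]
    (ν : Measure β) (p : ℝ) (hp : 1 ≤ p) (u v : β → N) :
    ∫⁻ t, edist (u t) (v t) ^ p ∂ν = Dp ν (ENNReal.ofReal p) u v ^ p := by
  have hp0 : 0 < p := lt_of_lt_of_le one_pos hp
  have hq0 : ENNReal.ofReal p ≠ 0 := by
    simp only [ne_eq, ENNReal.ofReal_eq_zero, not_le]; exact hp0
  have hqt : ENNReal.ofReal p ≠ ∞ := ENNReal.ofReal_ne_top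
  unfold Dp
  rw [eLpNorm_eq_lintegral_rpow_enorm_toReal hq0 hqt, ENNReal.toReal_ofReal hp0.le,
    ← ENNReal.rpow_mul, one_div, inv_mul_cancel₀ hp0.ne', ENNReal.rpow_one]
  congr 1
  funext t
  congr 1
  rw [edist_dist, ← Real.enorm_eq_ofReal dist_nonneg]

set_option maxHeartbeats 1600000 in
/-- Main construction, for a general nonzero finite measure `ν` on a general space `β`. -/
private theorem stmt7_aux {α : Type*} [MeasurableSpace α] {β : Type*} [MeasurableSpace β]
    {N : Type*} [MetricSpace N] [MeasurableSpace N] [BorelSpace N] [CompleteSpace N]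
    (μ : Measure α) (ν : Measure β) [IsFiniteMeasure ν] (hν0 : ν ≠ 0)
    (h : α → N) (hh : SM h)
    (p : ℝ) (hp : 1 ≤ p) [Fact (1 ≤ ENNReal.ofReal p)]
    (f : α → LpB ν N (ENNReal.ofReal p))
    (hfm : Measurable f) (hfs : TopologicalSpace.IsSeparable (Set.range f))
    (hff : ∫⁻ x, Dp ν (ENNReal.ofReal p) (f x).1 (fun _ => h x) ^ p ∂μ < ∞) :
    ∃ cHat : β × α → N, Measurable cHat ∧ TopologicalSpace.IsSeparable (Set.range cHat) ∧
      (∫⁻ q, edist (cHat q) (h q.2) ^ p ∂(ν.prod μ) < ∞) ∧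
      ∀ᵐ x ∂μ, (fun t => cHat (t, x)) =ᵐ[ν] (f x).1 := by
  classical
  have hp0 : 0 < p := lt_of_lt_of_le one_pos hp
  -- trivial case : empty base
  rcases isEmpty_or_nonempty α with hα | hα
  · refine ⟨fun qq => h qq.2, hh.1.comp measurable_snd,
      hh.2.mono (Set.range_comp_subset_range _ _), ?_, ?_⟩
    · simp only [edist_self, ENNReal.zero_rpow_of_pos hp0, lintegral_zero]
      exact ENNReal.zero_lt_top
    · exact Filter.Eventually.of_forall fun x => (IsEmpty.false x).elim
  have hq0 : ENNReal.ofReal p ≠ 0 := by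
    simp only [ne_eq, ENNReal.ofReal_eq_zero, not_le]; exact hp0
  have hqt : ENNReal.ofReal p ≠ ∞ := ENNReal.ofReal_ne_top
  -- the constant-curve embedding
  have hconstSM : ∀ y : N, SM (fun _ : β => y) := fun y =>
    ⟨measurable_const, ((Set.countable_singleton y).isSeparable).mono (Set.range_const_subset)⟩
  set hbar : N → LpB ν N (ENNReal.ofReal p) := fun y =>
    ⟨fun _ => y, hconstSM y, ⟨y, by rw [Dp_self]; exact ENNReal.zero_ne_top⟩⟩ with hhbar
  set C : ℝ≥0∞ := ν Set.univ ^ (1 / p) with hCdef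
  have hCne : C ≠ ∞ := ENNReal.rpow_ne_top_of_nonneg (by positivity) (measure_ne_top ν _)
  have hbar_edist : ∀ y y' : N, edist (hbar y) (hbar y') = edist y y' * C := by
    intro y y'
    have h1 : edist (hbar y) (hbar y') = Dp ν (ENNReal.ofReal p) (fun _ => y) (fun _ => y') :=
      LpB.edist_def _ _
    rw [h1]
    unfold Dp
    rw [eLpNorm_const _ hq0 hν0, ENNReal.toReal_ofReal hp0.le]
    congr 1
    rw [edist_dist, ← Real.enorm_eq_ofReal dist_nonneg]
  have hbar_cont : Continuous hbar := by
    refine LipschitzWith.continuous (K := C.toNNReal) fun y y' => ?_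
    rw [hbar_edist, ENNReal.coe_toNNReal hCne, mul_comm]
  -- countable dense family in the range of f
  obtain ⟨s, hsc, hss⟩ := hfs
  obtain ⟨x₀⟩ := hα
  haveI : Nonempty N := ⟨h x₀⟩
  obtain ⟨g, hg⟩ := (hsc.insert (f x₀)).exists_eq_range (Set.insert_nonempty _ _)
  have hεpos : ∀ k : ℕ, (0 : ℝ≥0∞) < 2⁻¹ ^ k :=
    fun k => ENNReal.pow_pos (by norm_num) k
  have hεle1 : ∀ k : ℕ, (2⁻¹ : ℝ≥0∞) ^ k ≤ 1 :=
    fun k => pow_le_one' (by norm_num) k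
  have hdense : ∀ x, ∀ k : ℕ, ∃ n, edist (f x) (g n) < 2⁻¹ ^ k := by
    intro x k
    have hx : f x ∈ closure (Set.range g) := by
      rw [← hg]
      exact closure_mono (Set.subset_insert _ _) (hss ⟨x, rfl⟩)
    obtain ⟨y, hy1, hy2⟩ := EMetric.mem_closure_iff.1 hx _ (hεpos k)
    obtain ⟨n, rfl⟩ := hy1
    exact ⟨n, hy2⟩
  -- measurable selections
  have hnn_meas : ∀ k : ℕ, Measurable fun x => Nat.find (hdense x k) := by
    intro k
    refine measurable_find (fun x => hdense x k) fun m => ?_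
    have hm : Measurable fun x => edist (f x) (g m) :=
      (Continuous.measurable (continuous_id.edist continuous_const)).comp hfm
    exact hm measurableSet_Iio
  have hgn_tendsto : ∀ x, Tendsto (fun k => g (Nat.find (hdense x k))) atTop (𝓝 (f x)) := by
    intro x
    rw [EMetric.tendsto_atTop]
    intro δ hδ
    have hev : ∀ᶠ k in atTop, (2⁻¹ : ℝ≥0∞) ^ k < δ :=
      (ENNReal.tendsto_pow_atTop_nhds_zero_of_lt_one (by norm_num)).eventually_lt_const hδ
    obtain ⟨K, hK⟩ := Filter.eventually_atTop.1 hev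
    refine ⟨K, fun k hk => ?_⟩
    rw [edist_comm]
    exact lt_trans (Nat.find_spec (hdense x k)) (hK k hk)
  -- the distance to the base point, and the σ-finite core
  set dD : α → ℝ≥0∞ := fun x => edist (f x) (hbar (h x)) with hdDdef
  have hdD_meas : Measurable dD := by
    have hw_meas : ∀ m : ℕ, Measurable fun x => edist (g m) (hbar (h x)) := fun m =>
      (Continuous.measurable (continuous_const.edist hbar_cont)).comp hh.1
    have he_meas : ∀ k : ℕ, Measurable fun x => edist (g (Nat.find (hdense x k))) (hbar (h x)) := by
      intro k
      refine Measurable.find (fun n => hw_meas n) (fun n => ?_) fun x => hdense x k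
      have hm : Measurable fun x => edist (f x) (g n) :=
        (Continuous.measurable (continuous_id.edist continuous_const)).comp hfm
      exact hm measurableSet_Iio
    have hlim : ∀ x, Tendsto (fun k => edist (g (Nat.find (hdense x k))) (hbar (h x)))
        atTop (𝓝 (dD x)) := fun x => (hgn_tendsto x).edist tendsto_const_nhds
    have heq : dD = fun x =>
        Filter.liminf (fun k => edist (g (Nat.find (hdense x k))) (hbar (h x))) atTop :=
      funext fun x => ((hlim x).liminf_eq).symm
    rw [heq]
    exact Measurable.liminf he_meas
  have hdD_eq : ∀ x, dD x = Dp ν (ENNReal.ofReal p) (f x).1 (fun _ => h x) :=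
    fun x => LpB.edist_def _ _
  set Sig0 : Set α := {x | dD x ≠ 0} with hSigdef
  have hSigmeas : MeasurableSet Sig0 := (hdD_meas (measurableSet_singleton 0)).compl
  have hffd : ∫⁻ x, dD x ^ p ∂μ < ∞ := by
    have : (fun x => dD x ^ p)
        = fun x => Dp ν (ENNReal.ofReal p) (f x).1 (fun _ => h x) ^ p := by
      funext x; rw [hdD_eq x]
    rw [this]
    exact hff
  have hdDp_meas : Measurable fun x => dD x ^ p :=
    ENNReal.continuous_rpow_const.measurable.comp hdD_meas
  haveI hsf : SigmaFinite (μ.restrict Sig0) := by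
    refine ⟨⟨⟨fun n => {x | ((n : ℝ≥0∞) + 1)⁻¹ ≤ dD x ^ p} ∪ Sig0ᶜ,
      fun _ => trivial, fun n => ?_, ?_⟩⟩⟩
    · rw [Measure.restrict_apply' hSigmeas]
      have hsub : ({x | ((n : ℝ≥0∞) + 1)⁻¹ ≤ dD x ^ p} ∪ Sig0ᶜ) ∩ Sig0 ⊆
          {x | ((n : ℝ≥0∞) + 1)⁻¹ ≤ dD x ^ p} := by
        rintro x ⟨hx1 | hx2, hx3⟩
        · exact hx1
        · exact absurd hx3 hx2
      refine lt_of_le_of_lt (measure_mono hsub) ?_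
      refine lt_of_le_of_lt (meas_ge_le_lintegral_div hdDp_meas.aemeasurable
        ?_ ?_) (ENNReal.div_lt_top hffd.ne ?_)
      · exact ENNReal.inv_ne_zero.2 (by simp)
      · exact ENNReal.inv_ne_top.2 (lt_of_lt_of_le zero_lt_one le_add_self).ne'
      · exact ENNReal.inv_ne_zero.2 (by simp)
    · rw [Set.eq_univ_iff_forall]
      intro x
      by_cases hx : dD x = 0
      · exact Set.mem_iUnion.2 ⟨0, Or.inr fun hc => hc hx⟩
      · have hpos : dD x ^ p ≠ 0 := by
          rw [ne_eq, ENNReal.rpow_eq_zero_iff]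
          push_neg
          exact ⟨fun h0 => absurd h0 hx, fun _ => hp0.le⟩
        obtain ⟨n, hn⟩ := ENNReal.exists_inv_nat_lt hpos
        refine Set.mem_iUnion.2 ⟨n, Or.inl (le_trans ?_ hn.le)⟩
        exact ENNReal.inv_le_inv.2 le_self_add
  haveI : SFinite (μ.restrict Sig0) := inferInstance
  -- the approximating maps
  set F : ℕ → α → LpB ν N (ENNReal.ofReal p) :=
    fun k x => if x ∈ Sig0 then g (Nat.find (hdense x k)) else hbar (h x) with hFdef
  have hFe : ∀ k x, edist (f x) (F k x) < 2⁻¹ ^ k := by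
    intro k x
    by_cases hx : x ∈ Sig0
    · simpa only [hFdef, if_pos hx] using Nat.find_spec (hdense x k)
    · simp only [hFdef, if_neg hx]
      have hx0 : dD x = 0 := not_not.1 hx
      calc edist (f x) (hbar (h x)) = dD x := rfl
        _ = 0 := hx0
        _ < 2⁻¹ ^ k := hεpos k
  set c : ℕ → β × α → N := fun k qq => (F k qq.2).1 qq.1 with hcdef
  have hc_eq : ∀ k, c k = fun qq : β × α =>
      if qq.2 ∈ Sig0 then (g (Nat.find (hdense qq.2 k))).1 qq.1 else h qq.2 := by
    intro k
    funext qq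
    simp only [hcdef, hFdef]
    split <;> rfl
  have hc_meas : ∀ k, Measurable (c k) := by
    intro k
    have h1 : Measurable fun pr : β × ℕ => (g pr.2).1 pr.1 :=
      measurable_from_prod_countable_left fun n => (g n).2.1.1
    have h2 : Measurable fun qq : β × α => (g (Nat.find (hdense qq.2 k))).1 qq.1 :=
      h1.comp (measurable_fst.prodMk ((hnn_meas k).comp measurable_snd))
    rw [hc_eq k]
    exact Measurable.ite (measurable_snd hSigmeas) h2 (hh.1.comp measurable_snd)
  -- ranges
  set A : Set N := (⋃ n, Set.range (g n).1) ∪ Set.range h with hAdef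
  have hA : IsSeparable A :=
    (isSeparable_iUnion.2 fun n => (g n).2.1.2).union hh.2
  have hcA : ∀ k qq, c k qq ∈ A := by
    intro k qq
    simp only [hcdef, hFdef]
    split
    · exact Or.inl (Set.mem_iUnion.2 ⟨_, ⟨qq.1, rfl⟩⟩)
    · exact Or.inr ⟨qq.2, rfl⟩
  have hcSM : ∀ k, SM (c k) := fun k =>
    ⟨hc_meas k, hA.mono (Set.range_subset_iff.2 (hcA k))⟩
  -- per-fiber estimates
  have hkey : ∀ (k : ℕ) (x : α),
      ∫⁻ t, edist (c k (t, x)) ((f x).1 t) ^ p ∂ν ≤ 2⁻¹ ^ k := by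
    intro k x
    have h1 : ∫⁻ t, edist ((F k x).1 t) ((f x).1 t) ^ p ∂ν
        = Dp ν (ENNReal.ofReal p) (F k x).1 (f x).1 ^ p :=
      lintegral_edist_rpow ν p hp _ _
    have h2 : Dp ν (ENNReal.ofReal p) (F k x).1 (f x).1 = edist (f x) (F k x) := by
      rw [LpB.edist_def, Dp_comm]
    calc ∫⁻ t, edist (c k (t, x)) ((f x).1 t) ^ p ∂ν
        = edist (f x) (F k x) ^ p := by rw [← h2]; exact h1
      _ ≤ ((2 : ℝ≥0∞)⁻¹ ^ k) ^ p := ENNReal.rpow_le_rpow (hFe k x).le hp0.le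
      _ ≤ ((2 : ℝ≥0∞)⁻¹ ^ k) ^ (1 : ℝ) :=
          ENNReal.rpow_le_rpow_of_exponent_ge (hεle1 k) hp
      _ = 2⁻¹ ^ k := ENNReal.rpow_one _
  -- a.e. convergence along each fiber
  have haed : ∀ x, ∀ᵐ t ∂ν, Tendsto (fun k => c k (t, x)) atTop (𝓝 ((f x).1 t)) := by
    intro x
    have hGm : ∀ k : ℕ, Measurable fun t => edist (c k (t, x)) ((f x).1 t) ^ p := fun k =>
      ENNReal.continuous_rpow_const.measurable.comp
        (sm_edist_measurable (F k x).2.1 (f x).2.1)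
    have hsum : ∫⁻ t, ∑' k, edist (c k (t, x)) ((f x).1 t) ^ p ∂ν ≠ ∞ := by
      rw [lintegral_tsum fun k => (hGm k).aemeasurable]
      refine ne_top_of_le_ne_top ?_ (ENNReal.tsum_le_tsum fun k => hkey k x)
      rw [ENNReal.tsum_geometric]
      refine ENNReal.inv_ne_top.2 ?_
      rw [ne_eq, tsub_eq_zero_iff_le]
      exact not_le.2 (ENNReal.inv_lt_one.mpr one_lt_two)
    filter_upwards [ae_lt_top (Measurable.ennreal_tsum hGm) hsum] with t ht
    have hterm : Tendsto (fun k => edist (c k (t, x)) ((f x).1 t) ^ p) atTop (𝓝 0) :=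
      ENNReal.tendsto_atTop_zero_of_tsum_ne_top ht.ne
    rw [EMetric.tendsto_atTop]
    intro δ hδ
    have hδ'0 : (0 : ℝ≥0∞) < min δ 1 := lt_min hδ zero_lt_one
    have hδ't : min δ 1 ≠ ∞ := ne_top_of_le_ne_top ENNReal.one_ne_top (min_le_right _ _)
    have hev : ∀ᶠ k in atTop, edist (c k (t, x)) ((f x).1 t) ^ p < min δ 1 ^ p :=
      hterm.eventually_lt_const (ENNReal.rpow_pos hδ'0 hδ't)
    obtain ⟨K, hK⟩ := Filter.eventually_atTop.1 hev
    refine ⟨K, fun k hk => ?_⟩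
    exact lt_of_lt_of_le ((ENNReal.rpow_lt_rpow_iff hp0).1 (hK k hk)) (min_le_left _ _)
  -- the set where the approximations converge
  set S : Set (β × α) := ⋂ m : ℕ, ⋃ K : ℕ, ⋂ j ∈ Set.Ici K, ⋂ l ∈ Set.Ici K,
      {qq | edist (c j qq) (c l qq) < ((m : ℝ≥0∞) + 1)⁻¹} with hSdef
  have hSmeas : MeasurableSet S := by
    refine MeasurableSet.iInter fun m => MeasurableSet.iUnion fun K => ?_
    refine MeasurableSet.biInter (Set.to_countable _) fun j _ => ?_
    refine MeasurableSet.biInter (Set.to_countable _) fun l _ => ?_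
    exact sm_edist_measurable (hcSM j) (hcSM l) measurableSet_Iio
  have hS_iff : ∀ qq, qq ∈ S ↔ CauchySeq fun k => c k qq := by
    intro qq
    constructor
    · intro hqq
      rw [EMetric.cauchySeq_iff]
      intro δ hδ
      obtain ⟨m, hm⟩ := ENNReal.exists_inv_nat_lt hδ.ne'
      simp only [hSdef, Set.mem_iInter, Set.mem_iUnion, Set.mem_setOf_eq, Set.mem_Ici] at hqq
      obtain ⟨K, hK⟩ := hqq m
      refine ⟨K, fun j hj l hl => lt_of_lt_of_le (hK j hj l hl) ?_⟩
      exact le_trans (ENNReal.inv_le_inv.2 le_self_add) hm.le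
    · intro hC
      simp only [hSdef, Set.mem_iInter, Set.mem_iUnion, Set.mem_setOf_eq, Set.mem_Ici]
      intro m
      obtain ⟨K, hK⟩ := EMetric.cauchySeq_iff.1 hC ((m : ℝ≥0∞) + 1)⁻¹
        (ENNReal.inv_pos.2 (by simp))
      exact ⟨K, fun j hj l hl => hK j hj l hl⟩
  -- the modified sequence and its limit
  set c' : ℕ → β × α → N := fun k qq => if qq ∈ S then c k qq else h qq.2 with hc'def
  have hc'A : ∀ k qq, c' k qq ∈ A := by
    intro k qq
    simp only [hc'def]
    split
    · exact hcA k qq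
    · exact Or.inr ⟨qq.2, rfl⟩
  have hc'_meas : ∀ k, Measurable (c' k) := fun k =>
    Measurable.ite hSmeas (hc_meas k) (hh.1.comp measurable_snd)
  have hex : ∀ qq, ∃ l, Tendsto (fun k => c' k qq) atTop (𝓝 l) := by
    intro qq
    by_cases hqq : qq ∈ S
    · have he : (fun k => c' k qq) = fun k => c k qq := funext fun k => if_pos hqq
      rw [he]
      exact cauchySeq_tendsto_of_complete ((hS_iff qq).1 hqq)
    · refine ⟨h qq.2, ?_⟩
      have he : (fun k => c' k qq) = fun _ => h qq.2 := funext fun k => if_neg hqq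
      rw [he]
      exact tendsto_const_nhds
  set cH : β × α → N := fun qq => limUnder atTop (fun k => c' k qq) with hcHdef
  have hconv : ∀ qq, Tendsto (fun k => c' k qq) atTop (𝓝 (cH qq)) := by
    intro qq
    simp only [hcHdef]
    exact tendsto_nhds_limUnder (hex qq)
  have hcH_meas : Measurable cH :=
    measurable_of_tendsto_metrizable' atTop hc'_meas (tendsto_pi_nhds.2 hconv)
  have hcH_sep : IsSeparable (Set.range cH) := by
    refine hA.closure.mono ?_
    rintro y ⟨qq, rfl⟩
    exact mem_closure_of_tendsto (hconv qq) (Filter.Eventually.of_forall fun k => hc'A k qq)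
  -- representative property (for every x)
  have hrepr : ∀ x, (fun t => cH (t, x)) =ᵐ[ν] (f x).1 := by
    intro x
    filter_upwards [haed x] with t ht
    have hqqS : (t, x) ∈ S := (hS_iff _).2 ht.cauchySeq
    have h1 : (fun k => c' k (t, x)) = fun k => c k (t, x) := funext fun k => if_pos hqqS
    have h2 : Tendsto (fun k => c' k (t, x)) atTop (𝓝 ((f x).1 t)) := by rw [h1]; exact ht
    exact tendsto_nhds_unique (hconv (t, x)) h2
  -- vanishing off the σ-finite core
  have hzero : ∀ t x, x ∉ Sig0 → cH (t, x) = h x := by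
    intro t x hx
    have hcc : ∀ k, c k (t, x) = h x := by
      intro k
      simp only [hcdef, hFdef, if_neg hx]
      rfl
    have hconst : (fun k => c k (t, x)) = fun _ => h x := funext hcc
    have hqqS : (t, x) ∈ S := by
      refine (hS_iff _).2 ?_
      rw [hconst]
      exact tendsto_const_nhds.cauchySeq
    have h2 : Tendsto (fun k => c' k (t, x)) atTop (𝓝 (h x)) := by
      have he : (fun k => c' k (t, x)) = fun _ => h x :=
        funext fun k => (if_pos hqqS).trans (hcc k)
      rw [he]
      exact tendsto_const_nhds
    exact tendsto_nhds_unique (hconv (t, x)) h2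
  -- finiteness of the product integral
  set G : β × α → ℝ≥0∞ := fun qq => edist (cH qq) (h qq.2) ^ p with hGdef
  have hG_meas : Measurable G :=
    ENNReal.continuous_rpow_const.measurable.comp
      (sm_edist_measurable ⟨hcH_meas, hcH_sep⟩
        ⟨hh.1.comp measurable_snd, hh.2.mono (Set.range_comp_subset_range _ _)⟩)
  have hGzero : ∀ t x, x ∉ Sig0 → G (t, x) = 0 := by
    intro t x hx
    simp only [hGdef, hzero t x hx, edist_self, ENNReal.zero_rpow_of_pos hp0]
  have hinner : ∀ t, ∫⁻ x, G (t, x) ∂μ = ∫⁻ x, G (t, x) ∂(μ.restrict Sig0) := by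
    intro t
    have hind : (fun x => G (t, x)) = Sig0.indicator fun x => G (t, x) := by
      funext x
      by_cases hx : x ∈ Sig0
      · rw [Set.indicator_of_mem hx]
      · rw [Set.indicator_of_notMem hx, hGzero t x hx]
    conv_lhs => rw [hind]
    exact lintegral_indicator hSigmeas _
  have hiter : ∫⁻ qq, G qq ∂(ν.prod μ) ≤ ∫⁻ t, ∫⁻ x, G (t, x) ∂μ ∂ν := by
    rw [Measure.prod_def]
    have hbd : (ν.bind fun t => μ.map (Prod.mk t)) =
        ((ν.map fun t => μ.map (Prod.mk t))).join := rfl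
    by_cases hker : AEMeasurable (fun t => μ.map (Prod.mk t)) ν
    · rw [hbd, Measure.lintegral_join hG_meas.aemeasurable,
        lintegral_map' (Measure.measurable_lintegral hG_meas).aemeasurable hker]
      refine le_of_eq (lintegral_congr fun t => ?_)
      rw [lintegral_map hG_meas measurable_prodMk_left]
    · rw [hbd, Measure.map_of_not_aemeasurable hker, Measure.join_zero]
      simp
  have hswap : ∫⁻ t, ∫⁻ x, G (t, x) ∂(μ.restrict Sig0) ∂ν
      = ∫⁻ x, ∫⁻ t, G (t, x) ∂ν ∂(μ.restrict Sig0) :=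
    lintegral_lintegral_swap hG_meas.aemeasurable
  have hfinal : ∀ x, ∫⁻ t, G (t, x) ∂ν
      = Dp ν (ENNReal.ofReal p) (f x).1 (fun _ => h x) ^ p := by
    intro x
    have h1 : ∫⁻ t, edist (cH (t, x)) (h x) ^ p ∂ν
        = Dp ν (ENNReal.ofReal p) (fun t => cH (t, x)) (fun _ => h x) ^ p :=
      lintegral_edist_rpow ν p hp _ _
    have h2 : Dp ν (ENNReal.ofReal p) (fun t => cH (t, x)) (fun _ => h x)
        = Dp ν (ENNReal.ofReal p) (f x).1 (fun _ => h x) := by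
      unfold Dp
      refine eLpNorm_congr_ae ?_
      filter_upwards [hrepr x] with t ht
      rw [show cH (t, x) = (f x).1 t from ht]
    rw [← h2]
    exact h1
  refine ⟨cH, hcH_meas, hcH_sep, ?_, Filter.Eventually.of_forall hrepr⟩
  calc ∫⁻ qq, G qq ∂(ν.prod μ) ≤ ∫⁻ t, ∫⁻ x, G (t, x) ∂μ ∂ν := hiter
    _ = ∫⁻ t, ∫⁻ x, G (t, x) ∂(μ.restrict Sig0) ∂ν := lintegral_congr fun t => hinner t
    _ = ∫⁻ x, ∫⁻ t, G (t, x) ∂ν ∂(μ.restrict Sig0) := hswap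
    _ = ∫⁻ x, Dp ν (ENNReal.ofReal p) (f x).1 (fun _ => h x) ^ p ∂(μ.restrict Sig0) :=
        lintegral_congr fun x => hfinal x
    _ ≤ ∫⁻ x, Dp ν (ENNReal.ofReal p) (f x).1 (fun _ => h x) ^ p ∂μ :=
        lintegral_mono' Measure.restrict_le_self le_rfl
    _ < ∞ := hff


/-- If `f : M → L^p([a,b],N)` (`N` complete) is Borel measurable with separable range and
`∫_M d_p(f(x), underline‑h(x))^p dμ < ∞` (where `underline‑h(x)` is the class of the
constant curve `t ↦ h x`), then there is a jointly Borel measurable, separably valued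
`cHat : [a,b] × M → N` with `∫ d(cHat(t,x), h(x))^p d(λ⊗μ) < ∞` such that for `μ`-a.e.
`x ∈ M`, the curve `t ↦ cHat(t,x)` is a representative of the class `f x`. -/
theorem stmt7 {α : Type*} [MeasurableSpace α] {N : Type*} [MetricSpace N]
    [MeasurableSpace N] [BorelSpace N] [CompleteSpace N]
    (μ : Measure α) (h : α → N) (hh : SM h)
    (p a b : ℝ) (hp : 1 ≤ p) (hab : a < b) [Fact (1 ≤ ENNReal.ofReal p)]
    (f : α → LpB (volume.restrict (Set.Icc a b)) N (ENNReal.ofReal p))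
    (hfm : Measurable f) (hfs : TopologicalSpace.IsSeparable (Set.range f))
    (hff : ∫⁻ x, Dp (volume.restrict (Set.Icc a b)) (ENNReal.ofReal p)
        (f x).1 (fun _ => h x) ^ p ∂μ < ∞) :
    ∃ cHat : ℝ × α → N, Measurable cHat ∧ TopologicalSpace.IsSeparable (Set.range cHat) ∧
      (∫⁻ q, edist (cHat q) (h q.2) ^ p ∂((volume.restrict (Set.Icc a b)).prod μ) < ∞) ∧
      ∀ᵐ x ∂μ, (fun t => cHat (t, x)) =ᵐ[volume.restrict (Set.Icc a b)] (f x).1 := by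
  haveI : IsFiniteMeasure (volume.restrict (Set.Icc a b)) :=
    ⟨by rw [Measure.restrict_apply_univ, Real.volume_Icc]; exact ENNReal.ofReal_lt_top⟩
  have hν0 : (volume.restrict (Set.Icc a b) : Measure ℝ) ≠ 0 := by
    intro h0
    have h1 : (volume.restrict (Set.Icc a b)) Set.univ = ENNReal.ofReal (b - a) := by
      rw [Measure.restrict_apply_univ, Real.volume_Icc]
    rw [h0] at h1
    simp only [Measure.coe_zero, Pi.zero_apply] at h1
    rw [eq_comm, ENNReal.ofReal_eq_zero] at h1
    linarith
  exact stmt7_aux μ (volume.restrict (Set.Icc a b)) hν0 h hh p hp f hfm hfs hff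

end NLS
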